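/- Let G be a finite group, A a normal abelian subgroup, and H a π-Hall subgroup of G with G = HA. Then H is pronormal in G. -/

import Mathlib

open Pointwise

/-- `conjSub H g` is the conjugate subgroup `H^g = g⁻¹Hg`. -/
def conjSub {G : Type*} [Group G] (H : Subgroup G) (g : G) : Subgroup G :=
  MulAut.conj g⁻¹ • H

/-- `H` is pronormal: for every `g`, `H` and `H^g` are conjugate in `⟨H, H^g⟩`. -/
def IsPronormal {G : Type*} [Group G] (H : Subgroup G) : Prop :=
  ∀ g : G, ∃ x ∈ H ⊔ conjSub H g, conjSub H x = conjSub H g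


/-- `H` is a `π`-Hall subgroup: `|H|` is a `π`-number and its index a `π'`-number. -/
def IsPiHall {G : Type*} [Group G] (π : Set ℕ) (H : Subgroup G) : Prop :=
  (∀ p : ℕ, p.Prime → p ∣ Nat.card H → p ∈ π) ∧
  (∀ p : ℕ, p.Prime → p ∣ H.index → p ∉ π)

section Helpers

variable {G : Type*} [Group G]

lemma mem_conjSub {H : Subgroup G} {g x : G} :
    x ∈ conjSub H g ↔ g * x * g⁻¹ ∈ H := by
  unfold conjSub
  rw [Subgroup.mem_pointwise_smul_iff_inv_smul_mem]
  simp [MulAut.smul_def, mul_assoc]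

lemma conjSub_conjSub {H : Subgroup G} (x y : G) :
    conjSub (conjSub H x) y = conjSub H (x * y) := by
  ext z
  simp only [mem_conjSub, mul_inv_rev, mul_assoc]

lemma conjSub_eq_self_of_mem {H : Subgroup G} {h : G} (hh : h ∈ H) :
    conjSub H h = H := by
  ext z
  rw [mem_conjSub]
  constructor
  · intro w
    have : h⁻¹ * (h * z * h⁻¹) * h ∈ H := H.mul_mem (H.mul_mem (H.inv_mem hh) w) hh
    simpa [mul_assoc] using this
  · intro w
    exact H.mul_mem (H.mul_mem hh w) (H.inv_mem hh)

lemma conjSub_eq_self_of_centralizer {H : Subgroup G} {c : G}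
    (hc : c ∈ Subgroup.centralizer (H : Set G)) : conjSub H c = H := by
  ext z
  rw [mem_conjSub]
  constructor
  · intro w
    have h1 : (c * z * c⁻¹) * c = c * (c * z * c⁻¹) :=
      Subgroup.mem_centralizer_iff.mp hc _ w
    have h2 : z = c * z * c⁻¹ := by
      have := mul_left_cancel (a := c) (by
        calc c * z = (c * z * c⁻¹) * c := by group
        _ = c * (c * z * c⁻¹) := h1)
      exact this
    rw [h2]; exact w
  · intro w
    have h1 : z * c = c * z := Subgroup.mem_centralizer_iff.mp hc _ w
    have : c * z * c⁻¹ = z := by rw [← h1]; group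
    rw [this]; exact w

/-- Conjugation by `g` as a homomorphism of a normal subgroup. -/
def conjHom (A : Subgroup G) [hA : A.Normal] (g : G) : ↥A →* ↥A where
  toFun x := ⟨g * (x : G) * g⁻¹, hA.conj_mem _ x.2 g⟩
  map_one' := by ext; simp
  map_mul' x y := by ext; push_cast; group

@[simp] lemma conjHom_apply (A : Subgroup G) [A.Normal] (g : G) (x : ↥A) :
    (conjHom A g x : G) = g * (x : G) * g⁻¹ := rfl

/-- If `A` is normal and `H ⊔ A = ⊤`, then the index of `H ⊓ A` in `A`
equals the index of `H` in `G`. -/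
lemma subgroupOf_index_eq (A H : Subgroup G) [A.Normal] (hHA : H ⊔ A = ⊤) :
    (H.subgroupOf A).index = H.index := by
  let f : ↥A ⧸ (H.subgroupOf A) → G ⧸ H :=
    Quotient.map' Subtype.val (fun x y hxy => by
      rw [QuotientGroup.leftRel_apply] at hxy ⊢
      simpa [Subgroup.mem_subgroupOf] using hxy)
  have hbij : Function.Bijective f := by
    constructor
    · intro x y hxy
      induction x using Quotient.inductionOn' with | h x =>
      induction y using Quotient.inductionOn' with | h y =>
      simp only [f, Quotient.map'_mk''] at hxy
      have h2 := QuotientGroup.leftRel_apply.mp (Quotient.eq''.mp hxy)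
      apply Quotient.sound'
      rw [QuotientGroup.leftRel_apply]
      simpa [Subgroup.mem_subgroupOf] using h2
    · intro qg
      induction qg using Quotient.inductionOn' with | h g =>
      have hg : g ∈ (A : Set G) * (H : Set G) := by
        rw [← Subgroup.normal_mul A H, sup_comm, hHA]
        trivial
      obtain ⟨a, haA, h, hhH, rfl⟩ := hg
      refine ⟨Quotient.mk'' ⟨a, haA⟩, ?_⟩
      simp only [f, Quotient.map'_mk'']
      apply Quotient.sound'
      rw [QuotientGroup.leftRel_apply]
      simpa using hhH
  unfold Subgroup.index
  exact Nat.card_congr (Equiv.ofBijective f hbij)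

end Helpers

open scoped IsMulCommutative

theorem stmt_13 {G : Type*} [Group G] [Finite G] (π : Set ℕ)
    (A H : Subgroup G) [A.Normal] [IsMulCommutative A]
    (hHall : IsPiHall π H) (hHA : H ⊔ A = ⊤) :
    IsPronormal H := by
  classical
  intro g
  -- decompose g = h0 * a
  have hg : g ∈ (H : Set G) * (A : Set G) := by
    rw [← Subgroup.mul_normal H A, hHA]; trivial
  obtain ⟨h0, hh0, a, haA, rfl⟩ := hg
  have key : conjSub H (h0 * a) = conjSub H a := by
    rw [← conjSub_conjSub, conjSub_eq_self_of_mem hh0]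
  rw [key]
  set U : Subgroup G := H ⊔ conjSub H a with hU
  -- the averaging argument in the abelian group A
  haveI : Fintype ↥H := Fintype.ofFinite _
  set n : ℕ := Nat.card ↥H with hn
  have hnft : n = Fintype.card ↥H := Nat.card_eq_fintype_card
  set ta : ↥A := ⟨a, haA⟩ with hta
  have hterm : ∀ h : ↥H, (h : G)⁻¹ * a * h ∈ A := fun h => by
    simpa using ‹A.Normal›.conj_mem a haA (h : G)⁻¹
  set term : ↥H → ↥A := fun h => ⟨(h : G)⁻¹ * a * h, hterm h⟩ with hterm_def
  set b : ↥A := ∏ h : ↥H, term h with hb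
  set c : ↥A := ∏ h : ↥H, ta⁻¹ * term h with hc
  -- b = ta ^ n * c
  have fact1 : b = ta ^ n * c := by
    rw [hb, hc, Finset.prod_mul_distrib, Finset.prod_const, Finset.card_univ, ← hnft]
    group
  -- b centralizes H
  have fact2 : (b : G) ∈ Subgroup.centralizer (H : Set G) := by
    rw [Subgroup.mem_centralizer_iff]
    intro h' hh'
    have hconj : conjHom A (h' : G)⁻¹ b = b := by
      rw [hb, map_prod]
      have hre : ∀ h : ↥H, conjHom A (h' : G)⁻¹ (term h) = term (h * ⟨h', hh'⟩) := by
        intro h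
        ext
        simp only [conjHom_apply, hterm_def]
        push_cast
        group
      rw [Finset.prod_congr rfl (fun h _ => hre h)]
      exact Equiv.prod_comp (Equiv.mulRight (⟨h', hh'⟩ : ↥H)) term
    have hcoe : (h' : G)⁻¹ * (b : G) * h' = (b : G) := by
      have := congrArg (Subtype.val) hconj
      simpa using this
    calc h' * (b : G) = h' * ((h' : G)⁻¹ * (b : G) * h') := by rw [hcoe]
    _ = (b : G) * h' := by group
  -- c lies in U
  have fact3 : (c : G) ∈ U := by
    have : c ∈ U.subgroupOf A := by
      rw [hc]
      apply Subgroup.prod_mem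
      intro h _
      rw [Subgroup.mem_subgroupOf]
      have e1 : a⁻¹ * (h : G) * a ∈ conjSub H a := by
        rw [mem_conjSub]
        have : a * (a⁻¹ * (h : G) * a) * a⁻¹ = (h : G) := by group
        rw [this]; exact h.2
      have e2 : a⁻¹ * (h : G)⁻¹ * a ∈ conjSub H a := by
        have : a⁻¹ * (h : G)⁻¹ * a = (a⁻¹ * (h : G) * a)⁻¹ := by group
        rw [this]; exact (conjSub H a).inv_mem e1
      have e3 : a⁻¹ * (h : G)⁻¹ * a ∈ U := Subgroup.mem_sup_right e2
      have e4 : (h : G) ∈ U := Subgroup.mem_sup_left h.2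
      have : ((ta⁻¹ * term h : ↥A) : G) = (a⁻¹ * (h : G)⁻¹ * a) * (h : G) := by
        simp only [hta, hterm_def]
        push_cast
        group
      rw [this]
      exact U.mul_mem e3 e4
    rwa [Subgroup.mem_subgroupOf] at this
  -- the three-piece subgroup of A
  set K1 : Subgroup ↥A := H.subgroupOf A with hK1
  set K2 : Subgroup ↥A := (Subgroup.centralizer (H : Set G)).subgroupOf A with hK2
  set K3 : Subgroup ↥A := U.subgroupOf A with hK3
  set M : Subgroup ↥A := K1 ⊔ K2 ⊔ K3 with hM
  have hbM : b ∈ M := Subgroup.mem_sup_left (Subgroup.mem_sup_right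
    (by rw [hK2, Subgroup.mem_subgroupOf]; exact fact2))
  have hcM : c ∈ M := Subgroup.mem_sup_right (by rw [hK3, Subgroup.mem_subgroupOf]; exact fact3)
  have htan : ta ^ n ∈ M := by
    have : ta ^ n = b * c⁻¹ := by rw [fact1]; group
    rw [this]; exact M.mul_mem hbM (M.inv_mem hcM)
  -- coprimality: n is a π-number, M.index is a π'-number
  have hMdvd : M.index ∣ H.index := by
    have h1 : M.index ∣ K1.index :=
      Subgroup.index_dvd_of_le (le_trans le_sup_left le_sup_left)
    rwa [hK1, subgroupOf_index_eq A H hHA] at h1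
  have hcop : Nat.Coprime n M.index := by
    rw [Nat.Coprime]
    by_contra hco
    obtain ⟨p, pp, hp⟩ := Nat.exists_prime_and_dvd hco
    have hp1 : p ∣ n := hp.trans (Nat.gcd_dvd_left _ _)
    have hp2 : p ∣ M.index := hp.trans (Nat.gcd_dvd_right _ _)
    exact hHall.2 p pp (hp2.trans hMdvd) (hHall.1 p pp hp1)
  -- conclude ta ∈ M
  have htaM : ta ∈ M := by
    set q := QuotientGroup.mk' M with hq
    have h1 : q ta ^ n = 1 := by
      rw [← map_pow, hq, QuotientGroup.mk'_apply, QuotientGroup.eq_one_iff]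
      exact htan
    have h2 : orderOf (q ta) ∣ n := orderOf_dvd_of_pow_eq_one h1
    have h3 : orderOf (q ta) ∣ M.index := by
      have := orderOf_dvd_natCard (q ta)
      simpa [Subgroup.index] using this
    have h4 : orderOf (q ta) = 1 :=
      Nat.eq_one_of_dvd_coprimes hcop h2 h3
    have h5 : q ta = 1 := orderOf_eq_one_iff.mp h4
    rwa [hq, QuotientGroup.mk'_apply, QuotientGroup.eq_one_iff] at h5
  -- extract the three factors
  obtain ⟨y, hy, k3, hk3, hyk⟩ := Subgroup.mem_sup.mp htaM
  obtain ⟨k1, hk1, k2, hk2, hk12⟩ := Subgroup.mem_sup.mp hy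
  rw [hK1, Subgroup.mem_subgroupOf] at hk1
  rw [hK2, Subgroup.mem_subgroupOf] at hk2
  rw [hK3, Subgroup.mem_subgroupOf] at hk3
  have ha_eq : a = (k1 : G) * (k2 : G) * (k3 : G) := by
    have : ((k1 * k2 * k3 : ↥A) : G) = a := by rw [hk12, hyk]
    rw [← this]; push_cast; ring_nf
  refine ⟨(k3 : G), hk3, ?_⟩
  have : conjSub H a = conjSub H (k3 : G) := by
    rw [ha_eq, ← conjSub_conjSub, ← conjSub_conjSub,
      conjSub_eq_self_of_mem hk1, conjSub_eq_self_of_centralizer hk2]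
  rw [this]
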